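/- The network-based redistribution mechanism (NRM) in trees runs no deficit: for every tree instance and every reported valuation profile, the surplus S = Σ_{i∈V} p_i of NRM is nonnegative. -/
import Mathlib


open Finset

attribute [local instance] Classical.propDecidable

noncomputable section

/-- A tree network rooted at a resource owner `o`: the agents are the elements of
the finite type `α`, and `parent i = none` means that the parent of agent `i` is
the owner `o` herself.  The field `depth` records the distance to the owner and
witnesses that the parent relation is well-founded. -/
structure TreeNet (α : Type) [Fintype α] [DecidableEq α] where
  parent : α → Option α
  depth : α → ℕ
  depth_root : ∀ i, parent i = none → depth i = 0
  depth_child : ∀ i j, parent i = some j → depth i = depth j + 1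

namespace TreeNet

variable {α : Type} [Fintype α] [DecidableEq α]

/-- `j` is a strict ancestor of `i`: iterating `parent` from `i` reaches `j`. -/
def StrictAnc (T : TreeNet α) (j i : α) : Prop :=
  ∃ m : ℕ, 0 < m ∧ (fun x : Option α => x.bind T.parent)^[m] (some i) = some j

/-- the subtree `V_i` of agent `i` inside the participant set `V`:
`i` together with all its descendants. -/
def sub (T : TreeNet α) (V : Finset α) (i : α) : Finset α :=
  V.filter fun x => x = i ∨ T.StrictAnc i x

/-- `n_i`, the number of agents in the subtree of `i`. -/
def nsub (T : TreeNet α) (V : Finset α) (i : α) : ℕ := (T.sub V i).card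

/-- `v^{(1)}_D`: the highest reported valuation in `D` (with the convention `0`
for `D = ∅`). -/
def vmax (val : α → ℝ) (D : Finset α) : ℝ :=
  if h : D.Nonempty then D.sup' h val else 0

/-- the list of strict ancestors of `i`, ordered by increasing depth. -/
def ancList (T : TreeNet α) (i : α) : List α :=
  match h : T.parent i with
  | none => []
  | some j => T.ancList j ++ [j]
termination_by T.depth i
decreasing_by
  have := T.depth_child i j h
  omega

/-- the full sequence `a_1, …, a_{k+1}`: the strict ancestors of the highest
bidder `hb` ordered by increasing depth, followed by `hb` itself. -/
def seq (T : TreeNet α) (hb : α) : List α := T.ancList hb ++ [hb]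

/-- `a_j`, as an `Option α`: `none` for `j = 0` (the owner `o`) and out of range. -/
def aIdx (T : TreeNet α) (hb : α) (j : ℕ) : Option α :=
  if j = 0 then none else (T.seq hb)[j - 1]?

/-- the required payment `p^{auc}_{a_j} = v^{(1)}_{V ∖ V_{a_j}}` (and `0` for `j = 0`). -/
def pauc (T : TreeNet α) (V : Finset α) (val : α → ℝ) (hb : α) (j : ℕ) : ℝ :=
  match T.aIdx hb j with
  | none => 0
  | some i => vmax val (V \ T.sub V i)

/-- the children inside `V` of a vertex (`none` denotes the owner `o`). -/
def childrenOf (T : TreeNet α) (V : Finset α) (x : Option α) : Finset α :=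
  V.filter fun y => T.parent y = x

/-- `X_j`: the set of children of `a_{j-1}`. -/
def X (T : TreeNet α) (V : Finset α) (hb : α) (j : ℕ) : Finset α :=
  T.childrenOf V (T.aIdx hb (j - 1))

/-- `n_{X_j} = Σ_{q ∈ X_j} n_q`. -/
def nX (T : TreeNet α) (V : Finset α) (hb : α) (j : ℕ) : ℕ :=
  ∑ q ∈ T.X V hb j, T.nsub V q

/-- subtree of an optional vertex, with the convention `∅` for `none`. -/
def subO (T : TreeNet α) (V : Finset α) : Option α → Finset α
  | none => ∅
  | some i => T.sub V i

/-- subtree of an optional vertex, with the convention `V` for the owner `o`. -/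
def subUp (T : TreeNet α) (V : Finset α) : Option α → Finset α
  | none => V
  | some i => T.sub V i

/-- `S_{-q}` at step `j`, where `sel` selects a highest bidder in a given set
(`h' = sel (V ∖ V_q)` is a highest bidder without `q`'s participation). -/
def Sneg (T : TreeNet α) (V : Finset α) (val : α → ℝ) (sel : Finset α → Option α)
    (hb : α) (j : ℕ) (q : α) : ℝ :=
  match sel (V \ T.sub V q) with
  | none => 0
  | some h' =>
      if T.aIdx h' (j - 1) = T.aIdx hb (j - 1) then
        vmax val (V \ (T.subO V (T.aIdx h' j) ∪ T.sub V q)) - T.pauc V val hb (j - 1)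
      else 0

/-- the money `R_q = (n_q / n_{X_j}) ⬝ S_{-q}` redistributed to `q` in step `j`. -/
def R (T : TreeNet α) (V : Finset α) (val : α → ℝ) (sel : Finset α → Option α)
    (hb : α) (j : ℕ) (q : α) : ℝ :=
  (T.nsub V q : ℝ) / (T.nX V hb j : ℝ) * T.Sneg V val sel hb j q

/-- the allocation condition `v̂_{a_j} ≥ p^{auc}_{a_j}` holds at step `j`. -/
def Stops (T : TreeNet α) (V : Finset α) (val : α → ℝ) (hb : α) (j : ℕ) : Prop :=
  ∃ i, T.aIdx hb j = some i ∧ T.pauc V val hb j ≤ val i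

/-- the step `J` at which the procedure stops. -/
def stepJ (T : TreeNet α) (V : Finset α) (val : α → ℝ) (hb : α) : ℕ :=
  sInf {j | 1 ≤ j ∧ T.Stops V val hb j}

/-- the winner of the item. -/
def winner (T : TreeNet α) (V : Finset α) (val : α → ℝ) (hb : α) : Option α :=
  T.aIdx hb (T.stepJ V val hb)

/-- the (first) step at which agent `i` is assigned a payment. -/
def stepOf (T : TreeNet α) (V : Finset α) (val : α → ℝ) (hb : α) (i : α) : ℕ :=
  sInf {j | 1 ≤ j ∧ j ≤ T.stepJ V val hb ∧ i ∈ T.X V hb j}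

/-- the payment of agent `i` under NRM: the winner pays `p^{auc}_{a_J} - R_{a_J}`,
every other agent considered in some executed step `j` pays `-R_q`, and every
agent not assigned a payment pays `0`. -/
def pay (T : TreeNet α) (V : Finset α) (val : α → ℝ) (sel : Finset α → Option α)
    (hb : α) (i : α) : ℝ :=
  if T.winner V val hb = some i then
    T.pauc V val hb (T.stepJ V val hb) - T.R V val sel hb (T.stepJ V val hb) i
  else if ∃ j, 1 ≤ j ∧ j ≤ T.stepJ V val hb ∧ i ∈ T.X V hb j then
    -T.R V val sel hb (T.stepOf V val hb i) i
  else 0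

/-- the surplus `S = Σ_{i ∈ V} p_i` of the mechanism. -/
def surplus (T : TreeNet α) (V : Finset α) (val : α → ℝ) (sel : Finset α → Option α)
    (hb : α) : ℝ :=
  ∑ i ∈ V, T.pay V val sel hb i

/-- the utility of agent `i` whose true valuation is `tv`:
`tv` if she wins, minus her payment. -/
def util (T : TreeNet α) (V : Finset α) (val : α → ℝ) (sel : Finset α → Option α)
    (hb : α) (tv : ℝ) (i : α) : ℝ :=
  (if T.winner V val hb = some i then tv else 0) - T.pay V val sel hb i

/-- the participant set `V` is closed under taking parents
(as is every set generated by invitation chains). -/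
def Closed (T : TreeNet α) (V : Finset α) : Prop :=
  ∀ i ∈ V, ∀ j, T.parent i = some j → j ∈ V

/-- `hb` is a highest bidder of `V`. -/
def IsTop (V : Finset α) (val : α → ℝ) (hb : α) : Prop :=
  hb ∈ V ∧ ∀ i ∈ V, val i ≤ val hb

/-- `sel` selects a highest bidder of every nonempty finite set of agents. -/
def SelValid (val : α → ℝ) (sel : Finset α → Option α) : Prop :=
  ∀ D : Finset α, (D.Nonempty → ∃ b, sel D = some b) ∧
    ∀ b, sel D = some b → b ∈ D ∧ ∀ x ∈ D, val x ≤ val b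

/-- the true neighbour set of agent `i` that she may invite: her children. -/
def childrenAll (T : TreeNet α) (i : α) : Finset α :=
  Finset.univ.filter fun y => T.parent y = some i

/-- agent `i` is reached from the owner by the chains of invitations `inv`
(the owner informs all her neighbours, i.e. the agents with `parent = none`). -/
def Reached (T : TreeNet α) (inv : α → Finset α) (i : α) : Prop :=
  match h : T.parent i with
  | none => True
  | some j => T.Reached inv j ∧ i ∈ inv j
termination_by T.depth i
decreasing_by
  have := T.depth_child i j h
  omega

/-- the participant set generated by the invitations `inv`. -/
def Vgen (T : TreeNet α) (inv : α → Finset α) : Finset α :=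
  Finset.univ.filter fun i => T.Reached inv i

end TreeNet

namespace TreeNet

variable {α : Type} [Fintype α] [DecidableEq α]

/-- one step of following the parent map in `Option α`. -/
def pf (T : TreeNet α) : Option α → Option α := fun x => x.bind T.parent

lemma pf_none (T : TreeNet α) (m : ℕ) : (T.pf)^[m] none = none := by
  induction m with
  | zero => rfl
  | succ m ih => rw [Function.iterate_succ_apply]; exact ih

lemma pf_some (T : TreeNet α) (i : α) : T.pf (some i) = T.parent i := rfl

lemma pf_depth (T : TreeNet α) : ∀ (m : ℕ) (i j : α),
    (T.pf)^[m] (some i) = some j → T.depth j + m = T.depth i := by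
  intro m
  induction m with
  | zero => intro i j h; simp only [Function.iterate_zero, id_eq, Option.some.injEq] at h; subst h; omega
  | succ m ih =>
    intro i j h
    rw [Function.iterate_succ_apply] at h
    cases hp : T.parent i with
    | none => rw [pf_some, hp, pf_none] at h; cases h
    | some p =>
      rw [pf_some, hp] at h
      have := ih p j h
      have := T.depth_child i p hp
      omega

lemma pf_exists_of_le (T : TreeNet α) : ∀ (m : ℕ) (i : α), m ≤ T.depth i →
    ∃ j, (T.pf)^[m] (some i) = some j := by
  intro m
  induction m with
  | zero => intro i _; exact ⟨i, rfl⟩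
  | succ m ih =>
    intro i hm
    cases hp : T.parent i with
    | none => have := T.depth_root i hp; omega
    | some p =>
      have hd := T.depth_child i p hp
      obtain ⟨j, hj⟩ := ih p (by omega)
      exact ⟨j, by rw [Function.iterate_succ_apply, pf_some, hp]; exact hj⟩

lemma pf_mem (T : TreeNet α) {V : Finset α} (hV : T.Closed V) :
    ∀ (m : ℕ) (i j : α), i ∈ V → (T.pf)^[m] (some i) = some j → j ∈ V := by
  intro m
  induction m with
  | zero =>
    intro i j hi h
    simp only [Function.iterate_zero, id_eq, Option.some.injEq] at h
    exact h ▸ hi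
  | succ m ih =>
    intro i j hi h
    rw [Function.iterate_succ_apply'] at h
    cases hc : (T.pf)^[m] (some i) with
    | none =>
      rw [hc] at h
      cases h
    | some c =>
      rw [hc] at h
      exact hV c (ih i c hi hc) j h

lemma ancList_none (T : TreeNet α) (i : α) (h : T.parent i = none) :
    T.ancList i = [] := by
  rw [ancList]; split <;> simp_all

lemma ancList_some (T : TreeNet α) (i p : α) (h : T.parent i = some p) :
    T.ancList i = T.ancList p ++ [p] := by
  rw [ancList]; split <;> simp_all

lemma seq_spec (T : TreeNet α) : ∀ (n : ℕ) (i : α), T.depth i = n →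
    (T.seq i).length = n + 1 ∧
      ∀ m ≤ n, (T.seq i)[m]? = (T.pf)^[n - m] (some i) := by
  intro n
  induction n with
  | zero =>
    intro i hd
    cases hp : T.parent i with
    | some p => have := T.depth_child i p hp; omega
    | none =>
      rw [seq, T.ancList_none i hp]
      refine ⟨rfl, ?_⟩
      intro m hm
      interval_cases m
      simp
  | succ n ih =>
    intro i hd
    cases hp : T.parent i with
    | none => have := T.depth_root i hp; omega
    | some p =>
      have hdp : T.depth p = n := by have := T.depth_child i p hp; omega
      obtain ⟨hlen, hget⟩ := ih p hdp
      have hseq : T.seq i = T.seq p ++ [i] := by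
        rw [seq, T.ancList_some i p hp, seq, List.append_assoc]
      rw [hseq]
      constructor
      · simp [hlen]
      · intro m hm
        rcases Nat.lt_or_ge m (n + 1) with hlt | hge
        · rw [List.getElem?_append, if_pos (by omega)]
          rw [hget m (by omega)]
          have : n + 1 - m = (n - m) + 1 := by omega
          rw [this, Function.iterate_succ_apply, pf_some, hp]
        · have hme : m = n + 1 := by omega
          subst hme
          have : n + 1 = (T.seq p).length := by omega
          rw [this, List.getElem?_concat_length]
          simp

lemma seq_length (T : TreeNet α) (i : α) : (T.seq i).length = T.depth i + 1 :=
  (T.seq_spec (T.depth i) i rfl).1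

lemma seq_get (T : TreeNet α) (i : α) (m : ℕ) (hm : m ≤ T.depth i) :
    (T.seq i)[m]? = (T.pf)^[T.depth i - m] (some i) :=
  (T.seq_spec (T.depth i) i rfl).2 m hm

lemma aIdx_zero (T : TreeNet α) (hb : α) : T.aIdx hb 0 = none := rfl

lemma aIdx_eq (T : TreeNet α) (hb : α) (j : ℕ) (h1 : 1 ≤ j) (h2 : j ≤ T.depth hb + 1) :
    T.aIdx hb j = (T.pf)^[T.depth hb + 1 - j] (some hb) := by
  rw [aIdx, if_neg (by omega), T.seq_get hb (j-1) (by omega)]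
  congr 1
  omega

lemma aIdx_some (T : TreeNet α) (hb : α) (j : ℕ) (h1 : 1 ≤ j) (h2 : j ≤ T.depth hb + 1) :
    ∃ a, T.aIdx hb j = some a := by
  rw [T.aIdx_eq hb j h1 h2]
  exact T.pf_exists_of_le _ hb (by omega)

lemma aIdx_bounds (T : TreeNet α) {hb a : α} {j : ℕ} (h : T.aIdx hb j = some a) :
    1 ≤ j ∧ j ≤ T.depth hb + 1 ∧ T.depth a = j - 1 := by
  rw [aIdx] at h
  split at h
  · cases h
  · rename_i hj0
    have h1 : 1 ≤ j := by omega
    obtain ⟨hlt, -⟩ := List.getElem?_eq_some_iff.mp h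
    rw [T.seq_length] at hlt
    have h2 : j ≤ T.depth hb + 1 := by omega
    rw [T.seq_get hb (j-1) (by omega)] at h
    have := T.pf_depth _ hb a h
    exact ⟨h1, h2, by omega⟩

lemma aIdx_depth (T : TreeNet α) {hb a : α} {j : ℕ} (h : T.aIdx hb j = some a) :
    T.depth a = j - 1 := (T.aIdx_bounds h).2.2

lemma aIdx_pf (T : TreeNet α) {hb a : α} {j : ℕ} (h : T.aIdx hb j = some a) :
    (T.pf)^[T.depth hb + 1 - j] (some hb) = some a := by
  obtain ⟨h1, h2, -⟩ := T.aIdx_bounds h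
  rw [← T.aIdx_eq hb j h1 h2]; exact h

lemma aIdx_inj (T : TreeNet α) {hb a : α} {j j' : ℕ}
    (h : T.aIdx hb j = some a) (h' : T.aIdx hb j' = some a) : j = j' := by
  obtain ⟨h1, -, h3⟩ := T.aIdx_bounds h
  obtain ⟨h1', -, h3'⟩ := T.aIdx_bounds h'
  omega

lemma parent_aIdx (T : TreeNet α) {hb a : α} {j : ℕ} (h : T.aIdx hb j = some a) :
    T.parent a = T.aIdx hb (j - 1) := by
  obtain ⟨h1, h2, h3⟩ := T.aIdx_bounds h
  rcases Nat.lt_or_ge 1 j with hj | hj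
  · obtain ⟨b, hbody⟩ := T.aIdx_some hb (j-1) (by omega) (by omega)
    have hpa := T.aIdx_pf h
    have hpb := T.aIdx_pf hbody
    have harith : T.depth hb + 1 - (j - 1) = (T.depth hb + 1 - j) + 1 := by omega
    rw [harith, Function.iterate_succ_apply', hpa, pf_some] at hpb
    rw [hpb, hbody]
  · have hj1 : j = 1 := by omega
    subst hj1
    rw [aIdx_zero]
    cases hp : T.parent a with
    | none => rfl
    | some p => have := T.depth_child a p hp; omega

lemma mem_sub_iff (T : TreeNet α) {V : Finset α} {i x : α} :
    x ∈ T.sub V i ↔ x ∈ V ∧ ∃ m, (T.pf)^[m] (some x) = some i := by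
  rw [sub, Finset.mem_filter]
  constructor
  · rintro ⟨hx, hc | ⟨m, hm, hit⟩⟩
    · exact ⟨hx, 0, by simp [hc]⟩
    · exact ⟨hx, m, hit⟩
  · rintro ⟨hx, m, hit⟩
    rcases Nat.eq_zero_or_pos m with hm | hm
    · subst hm
      simp only [Function.iterate_zero, id_eq, Option.some.injEq] at hit
      exact ⟨hx, Or.inl hit⟩
    · exact ⟨hx, Or.inr ⟨m, hm, hit⟩⟩

lemma sub_subset (T : TreeNet α) (V : Finset α) (i : α) : T.sub V i ⊆ V :=
  Finset.filter_subset _ _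

lemma mem_sub_self (T : TreeNet α) {V : Finset α} {i : α} (h : i ∈ V) :
    i ∈ T.sub V i := T.mem_sub_iff.mpr ⟨h, 0, rfl⟩

lemma depth_le_of_mem_sub (T : TreeNet α) {V : Finset α} {i x : α}
    (h : x ∈ T.sub V i) : T.depth i ≤ T.depth x := by
  obtain ⟨-, m, hm⟩ := T.mem_sub_iff.mp h
  have := T.pf_depth m x i hm
  omega

lemma sub_subset_of_parent (T : TreeNet α) {V : Finset α} {a b : α}
    (h : T.parent b = some a) : T.sub V b ⊆ T.sub V a := by
  intro x hx
  obtain ⟨hxV, m, hm⟩ := T.mem_sub_iff.mp hx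
  refine T.mem_sub_iff.mpr ⟨hxV, m + 1, ?_⟩
  rw [Function.iterate_succ_apply', hm, pf_some, h]

lemma sub_disjoint (T : TreeNet α) {V : Finset α} {a b x : α}
    (hd : T.depth a = T.depth b) (hne : a ≠ b)
    (ha : x ∈ T.sub V a) (hb : x ∈ T.sub V b) : False := by
  obtain ⟨-, m, hm⟩ := T.mem_sub_iff.mp ha
  obtain ⟨-, m', hm'⟩ := T.mem_sub_iff.mp hb
  have h1 := T.pf_depth m x a hm
  have h2 := T.pf_depth m' x b hm'
  have : m = m' := by omega
  subst this
  rw [hm] at hm'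
  exact hne (by injection hm')

lemma nsub_pos (T : TreeNet α) {V : Finset α} {i : α} (h : i ∈ V) :
    0 < T.nsub V i :=
  Finset.card_pos.mpr ⟨i, T.mem_sub_self h⟩

lemma le_vmax {val : α → ℝ} {D : Finset α} {x : α} (h : x ∈ D) :
    val x ≤ vmax val D := by
  rw [vmax, dif_pos ⟨x, h⟩]
  exact Finset.le_sup' val h

lemma vmax_nonneg {val : α → ℝ} {D : Finset α} (h : ∀ x ∈ D, 0 ≤ val x) :
    0 ≤ vmax val D := by
  rw [vmax]
  split
  · rename_i hne
    obtain ⟨x, hx⟩ := hne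
    exact le_trans (h x hx) (Finset.le_sup' val hx)
  · exact le_refl _

lemma vmax_le {val : α → ℝ} {D : Finset α} {c : ℝ} (hc : 0 ≤ c)
    (h : ∀ x ∈ D, val x ≤ c) : vmax val D ≤ c := by
  rw [vmax]
  split
  · exact Finset.sup'_le _ _ h
  · exact hc

lemma pauc_zero (T : TreeNet α) (V : Finset α) (val : α → ℝ) (hb : α) :
    T.pauc V val hb 0 = 0 := by
  rw [pauc, aIdx_zero]

lemma pauc_eq (T : TreeNet α) (V : Finset α) (val : α → ℝ) {hb a : α} {j : ℕ}
    (h : T.aIdx hb j = some a) :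
    T.pauc V val hb j = vmax val (V \ T.sub V a) := by
  rw [pauc, h]

lemma pauc_nonneg (T : TreeNet α) {V : Finset α} {val : α → ℝ}
    (hval : ∀ i ∈ V, 0 ≤ val i) (hb : α) (j : ℕ) :
    0 ≤ T.pauc V val hb j := by
  rw [pauc]
  split
  · exact le_refl _
  · exact vmax_nonneg fun x hx => hval x (Finset.mem_sdiff.mp hx).1

lemma pauc_mono (T : TreeNet α) {V : Finset α} {val : α → ℝ}
    (hval : ∀ i ∈ V, 0 ≤ val i) {hb : α} {j : ℕ}
    (h1 : 1 ≤ j) (h2 : j ≤ T.depth hb + 1) :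
    T.pauc V val hb (j - 1) ≤ T.pauc V val hb j := by
  obtain ⟨a, ha⟩ := T.aIdx_some hb j h1 h2
  rw [T.pauc_eq V val ha]
  rcases Nat.lt_or_ge 1 j with hj | hj
  · obtain ⟨b, hbb⟩ := T.aIdx_some hb (j - 1) (by omega) (by omega)
    rw [T.pauc_eq V val hbb]
    have hpar : T.parent a = some b := by rw [T.parent_aIdx ha, hbb]
    refine vmax_le (vmax_nonneg fun x hx => hval x (Finset.mem_sdiff.mp hx).1) ?_
    intro x hx
    refine le_vmax ?_
    rw [Finset.mem_sdiff] at hx ⊢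
    exact ⟨hx.1, fun hc => hx.2 (T.sub_subset_of_parent hpar hc)⟩
  · have : j = 1 := by omega
    subst this
    rw [show (1 : ℕ) - 1 = 0 from rfl, T.pauc_zero]
    exact vmax_nonneg fun x hx => hval x (Finset.mem_sdiff.mp hx).1

lemma mem_X_iff (T : TreeNet α) {V : Finset α} {hb q : α} {j : ℕ} :
    q ∈ T.X V hb j ↔ q ∈ V ∧ T.parent q = T.aIdx hb (j - 1) := by
  rw [X, childrenOf, Finset.mem_filter]

lemma aIdx_mem_X (T : TreeNet α) {V : Finset α} (hV : T.Closed V) {hb a : α}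
    (hhbV : hb ∈ V) {j : ℕ} (h : T.aIdx hb j = some a) : a ∈ T.X V hb j := by
  refine T.mem_X_iff.mpr ⟨?_, T.parent_aIdx h⟩
  exact T.pf_mem hV _ hb a hhbV (T.aIdx_pf h)

lemma X_inj (T : TreeNet α) {V : Finset α} {hb q : α} {j j' : ℕ}
    (h1 : 1 ≤ j) (h2 : j ≤ T.depth hb + 1) (h1' : 1 ≤ j') (h2' : j' ≤ T.depth hb + 1)
    (hq : q ∈ T.X V hb j) (hq' : q ∈ T.X V hb j') : j = j' := by
  have e1 := (T.mem_X_iff.mp hq).2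
  have e2 := (T.mem_X_iff.mp hq').2
  cases hp : T.parent q with
  | none =>
    rw [hp] at e1 e2
    by_contra hne
    rcases Nat.lt_or_ge 1 j with hj | hj
    · obtain ⟨b, hbb⟩ := T.aIdx_some hb (j - 1) (by omega) (by omega)
      rw [hbb] at e1; cases e1
    · rcases Nat.lt_or_ge 1 j' with hj' | hj'
      · obtain ⟨b, hbb⟩ := T.aIdx_some hb (j' - 1) (by omega) (by omega)
        rw [hbb] at e2; cases e2
      · omega
  | some p =>
    rw [hp] at e1 e2
    have := T.aIdx_inj e1.symm e2.symm
    omega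

lemma Sneg_le (T : TreeNet α) {V : Finset α} {val : α → ℝ}
    {sel : Finset α → Option α} {hb : α}
    (hval : ∀ i ∈ V, 0 ≤ val i) (hsel : TreeNet.SelValid val sel)
    {j : ℕ} (h1 : 1 ≤ j) (h2 : j ≤ T.depth hb + 1) (q : α) :
    T.Sneg V val sel hb j q ≤ T.pauc V val hb j - T.pauc V val hb (j - 1) := by
  have hΔ : 0 ≤ T.pauc V val hb j - T.pauc V val hb (j - 1) :=
    sub_nonneg.mpr (T.pauc_mono hval h1 h2)
  rw [Sneg]
  cases hse : sel (V \ T.sub V q) with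
  | none => exact hΔ
  | some h' =>
    show (if T.aIdx h' (j - 1) = T.aIdx hb (j - 1) then
        TreeNet.vmax val (V \ (T.subO V (T.aIdx h' j) ∪ T.sub V q)) - T.pauc V val hb (j - 1)
      else 0) ≤ T.pauc V val hb j - T.pauc V val hb (j - 1)
    split
    · obtain ⟨hmem, htop⟩ := (hsel (V \ T.sub V q)).2 h' hse
      rw [Finset.mem_sdiff] at hmem
      obtain ⟨a, ha⟩ := T.aIdx_some hb j h1 h2
      rw [T.pauc_eq V val ha]
      have hvm : 0 ≤ vmax val (V \ T.sub V a) :=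
        vmax_nonneg fun x hx => hval x (Finset.mem_sdiff.mp hx).1
      refine sub_le_sub_right (vmax_le hvm ?_) _
      intro x hx
      rw [Finset.mem_sdiff, Finset.mem_union] at hx
      obtain ⟨hxV, hxn⟩ := hx
      push_neg at hxn
      obtain ⟨hx1, hx2⟩ := hxn
      by_cases hxa : x ∈ T.sub V a
      · have hh' : h' ∉ T.sub V a := by
          cases hj' : T.aIdx h' j with
          | some b =>
            by_cases hba : b = a
            · subst hba
              rw [hj'] at hx1
              exact absurd hxa hx1
            · intro hc
              have hdb := T.aIdx_depth hj'
              have hda := T.aIdx_depth ha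
              have hh'b : h' ∈ T.sub V b :=
                T.mem_sub_iff.mpr ⟨hmem.1, _, T.aIdx_pf hj'⟩
              exact T.sub_disjoint (hdb.trans hda.symm) hba hh'b hc
          | none =>
            have hlen : (T.seq h').length ≤ j - 1 := by
              rw [aIdx, if_neg (by omega)] at hj'
              exact List.getElem?_eq_none_iff.mp hj'
            rw [T.seq_length] at hlen
            intro hc
            have hle := T.depth_le_of_mem_sub hc
            have hda := T.aIdx_depth ha
            omega
        have hxq : x ∈ V \ T.sub V q := Finset.mem_sdiff.mpr ⟨hxV, hx2⟩
        calc val x ≤ val h' := htop x hxq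
          _ ≤ vmax val (V \ T.sub V a) :=
            le_vmax (Finset.mem_sdiff.mpr ⟨hmem.1, hh'⟩)
      · exact le_vmax (Finset.mem_sdiff.mpr ⟨hxV, hxa⟩)
    · exact hΔ

lemma step_sum_le (T : TreeNet α) {V : Finset α} (hV : T.Closed V) {val : α → ℝ}
    {sel : Finset α → Option α} {hb : α}
    (hval : ∀ i ∈ V, 0 ≤ val i) (hsel : TreeNet.SelValid val sel) (hhbV : hb ∈ V)
    {j : ℕ} (h1 : 1 ≤ j) (h2 : j ≤ T.depth hb + 1) :
    ∑ q ∈ T.X V hb j, T.R V val sel hb j q ≤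
      T.pauc V val hb j - T.pauc V val hb (j - 1) := by
  obtain ⟨a, ha⟩ := T.aIdx_some hb j h1 h2
  have haX : a ∈ T.X V hb j := T.aIdx_mem_X hV hhbV ha
  have haV : a ∈ V := (T.mem_X_iff.mp haX).1
  have hnX : 0 < T.nX V hb j := by
    rw [nX]
    calc 0 < T.nsub V a := T.nsub_pos haV
    _ ≤ _ := Finset.single_le_sum (f := fun q => T.nsub V q) (fun _ _ => Nat.zero_le _) haX
  have hnXR : (0 : ℝ) < (T.nX V hb j : ℝ) := by exact_mod_cast hnX
  set Δ := T.pauc V val hb j - T.pauc V val hb (j - 1) with hΔdef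
  calc ∑ q ∈ T.X V hb j, T.R V val sel hb j q
      ≤ ∑ q ∈ T.X V hb j, (T.nsub V q : ℝ) / (T.nX V hb j : ℝ) * Δ := by
        refine Finset.sum_le_sum fun q hq => ?_
        rw [R]
        exact mul_le_mul_of_nonneg_left (T.Sneg_le hval hsel h1 h2 q) (by positivity)
    _ = Δ := by
        rw [← Finset.sum_mul, ← Finset.sum_div, ← Nat.cast_sum, ← nX,
          div_self (ne_of_gt hnXR), one_mul]

lemma sum_Icc_telescope (g : ℕ → ℝ) : ∀ n : ℕ,
    ∑ j ∈ Finset.Icc 1 n, (g j - g (j - 1)) = g n - g 0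
  | 0 => by simp
  | (n + 1) => by
    rw [Finset.sum_Icc_succ_top (by omega), sum_Icc_telescope g n,
      show n + 1 - 1 = n by omega]
    ring

end TreeNet



/-- The network-based redistribution mechanism in trees runs no
deficit: on every tree instance and every reported valuation profile, the
surplus `S = Σ_{i ∈ V} p_i` of NRM is nonnegative. -/
theorem TreeNet.nrm_tree_non_deficit
    {α : Type} [Fintype α] [DecidableEq α] (T : TreeNet α)
    (V : Finset α) (hV : T.Closed V)
    (val : α → ℝ) (hval : ∀ i ∈ V, 0 ≤ val i)
    (sel : Finset α → Option α) (hsel : TreeNet.SelValid val sel)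
    (hb : α) (hhb : TreeNet.IsTop V val hb) :
    0 ≤ T.surplus V val sel hb := by
  obtain ⟨hhbV, hhbtop⟩ := hhb
  set d := T.depth hb with hd
  -- the procedure stops no later than step `d + 1`
  have hlast : T.aIdx hb (d + 1) = some hb := by
    rw [T.aIdx_eq hb (d + 1) (by omega) (by omega)]
    rw [show T.depth hb + 1 - (d + 1) = 0 by omega]
    rfl
  have hstop_len : T.Stops V val hb (d + 1) := by
    refine ⟨hb, hlast, ?_⟩
    rw [T.pauc_eq V val hlast]
    exact vmax_le (hval hb hhbV) fun x hx => hhbtop x (Finset.mem_sdiff.mp hx).1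
  set J := T.stepJ V val hb with hJdef
  have hJmem : 1 ≤ J ∧ T.Stops V val hb J :=
    Nat.sInf_mem (⟨d + 1, by omega, hstop_len⟩ :
      Set.Nonempty {j | 1 ≤ j ∧ T.Stops V val hb j})
  have hJle : J ≤ d + 1 := Nat.sInf_le ⟨by omega, hstop_len⟩
  have hJle' : T.stepJ V val hb ≤ T.depth hb + 1 := hJle
  have hJ1 := hJmem.1
  obtain ⟨aJ, haJ, -⟩ := hJmem.2
  have hwin : T.winner V val hb = some aJ := by rw [winner, ← hJdef, haJ]
  have haJX : aJ ∈ T.X V hb J := T.aIdx_mem_X hV hhbV haJ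
  -- pairwise disjointness of the sets `X_j`
  have hXinj : ∀ j ∈ Finset.Icc 1 J, ∀ j' ∈ Finset.Icc 1 J, ∀ q : α,
      q ∈ T.X V hb j → q ∈ T.X V hb j' → j = j' := by
    intro j hj j' hj' q hq hq'
    rw [Finset.mem_Icc] at hj hj'
    exact T.X_inj hj.1 (by omega) hj'.1 (by omega) hq hq'
  set B := (Finset.Icc 1 J).biUnion (fun j => T.X V hb j) with hB
  have hBV : B ⊆ V := by
    intro x hx
    rw [hB, Finset.mem_biUnion] at hx
    obtain ⟨j, -, hj⟩ := hx
    exact (T.mem_X_iff.mp hj).1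
  have hpay0 : ∀ i ∈ V, i ∉ B → T.pay V val sel hb i = 0 := by
    intro i hi hiB
    rw [pay, ← hJdef, if_neg, if_neg]
    · rintro ⟨j, hj1, hj2, hjX⟩
      exact hiB (Finset.mem_biUnion.mpr ⟨j, Finset.mem_Icc.mpr ⟨hj1, hj2⟩, hjX⟩)
    · intro hwi
      rw [hwin, Option.some.injEq] at hwi
      refine hiB (Finset.mem_biUnion.mpr ⟨J, Finset.mem_Icc.mpr ⟨hJ1, le_refl J⟩, ?_⟩)
      rw [← hwi]; exact haJX
  have hper : ∀ j ∈ Finset.Icc 1 J, ∀ i ∈ T.X V hb j,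
      T.pay V val sel hb i =
        (if i = aJ then T.pauc V val hb J else 0) - T.R V val sel hb j i := by
    intro j hj i hiX
    have hjIcc := hj
    rw [Finset.mem_Icc] at hj
    have hstep : T.stepOf V val hb i = j := by
      have hmem : j ∈ {j' | 1 ≤ j' ∧ j' ≤ T.stepJ V val hb ∧ i ∈ T.X V hb j'} :=
        ⟨hj.1, hj.2, hiX⟩
      have hsinf := Nat.sInf_mem (⟨j, hmem⟩ :
        Set.Nonempty {j' | 1 ≤ j' ∧ j' ≤ T.stepJ V val hb ∧ i ∈ T.X V hb j'})
      obtain ⟨h1', h2', hX'⟩ := hsinf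
      rw [stepOf]
      exact T.X_inj h1' (le_trans h2' hJle') hj.1 (by omega) hX' hiX
    by_cases hia : i = aJ
    · subst hia
      have hjJ : j = J := T.X_inj hj.1 (by omega) hJ1 (by omega) hiX haJX
      subst hjJ
      rw [pay, ← hJdef, if_pos (by rw [hwin]), if_pos rfl]
    · rw [pay, ← hJdef, if_neg, if_pos, hstep, if_neg hia, zero_sub]
      · exact ⟨j, hj.1, hj.2, hiX⟩
      · intro hwi
        rw [hwin, Option.some.injEq] at hwi
        exact hia hwi.symm
  have hdisj : (↑(Finset.Icc 1 J) : Set ℕ).PairwiseDisjoint (fun j => T.X V hb j) := by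
    intro j hj j' hj' hne
    rw [Finset.coe_Icc] at hj hj'
    refine Finset.disjoint_left.mpr fun q hq hq' => hne ?_
    exact hXinj j (Finset.mem_Icc.mpr hj) j' (Finset.mem_Icc.mpr hj') q hq hq'
  have hsum : T.surplus V val sel hb =
      ∑ j ∈ Finset.Icc 1 J, ∑ i ∈ T.X V hb j, T.pay V val sel hb i := by
    rw [surplus, ← Finset.sum_biUnion hdisj, ← hB]
    exact (Finset.sum_subset hBV hpay0).symm
  have hstepval : ∀ j ∈ Finset.Icc 1 J,
      ∑ i ∈ T.X V hb j, T.pay V val sel hb i =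
        (if j = J then T.pauc V val hb J else 0) -
          ∑ i ∈ T.X V hb j, T.R V val sel hb j i := by
    intro j hj
    rw [Finset.sum_congr rfl (hper j hj), Finset.sum_sub_distrib]
    congr 1
    rw [Finset.sum_ite_eq' (T.X V hb j) aJ (fun _ => T.pauc V val hb J)]
    by_cases hjJ : j = J
    · rw [if_pos hjJ, if_pos (hjJ ▸ haJX)]
    · rw [if_neg, if_neg hjJ]
      intro hc
      exact hjJ (hXinj j hj J (Finset.mem_Icc.mpr ⟨hJ1, le_refl J⟩) aJ hc haJX)
  have hfirst : ∑ j ∈ Finset.Icc 1 J, (if j = J then T.pauc V val hb J else 0) =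
      T.pauc V val hb J := by
    rw [Finset.sum_ite_eq' (Finset.Icc 1 J) J (fun _ => T.pauc V val hb J),
      if_pos (Finset.mem_Icc.mpr ⟨hJ1, le_refl J⟩)]
  have htel : ∑ j ∈ Finset.Icc 1 J, (T.pauc V val hb j - T.pauc V val hb (j - 1)) =
      T.pauc V val hb J := by
    rw [sum_Icc_telescope (fun i => T.pauc V val hb i) J, T.pauc_zero, sub_zero]
  have hRle : ∑ j ∈ Finset.Icc 1 J, ∑ i ∈ T.X V hb j, T.R V val sel hb j i ≤
      T.pauc V val hb J := by
    rw [← htel]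
    refine Finset.sum_le_sum fun j hj => ?_
    rw [Finset.mem_Icc] at hj
    exact T.step_sum_le hV hval hsel hhbV hj.1 (by omega)
  rw [hsum, Finset.sum_congr rfl hstepval, Finset.sum_sub_distrib, hfirst]
  linarith
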